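/- Let δ > 0 and w : [δ,∞) → ℝ be twice differentiable, continuously differentiable, and bounded below. Suppose t·w''(t) + α·w'(t) ≤ m(t) for almost every t > δ, where α > 1 and m : (δ,∞) → [0,∞) is integrable. Then the positive part of w' is integrable on (δ,∞) and lim_{t→∞} w(t) exists. -/

import Mathlib

open MeasureTheory Filter Asymptotics Set

theorem stmt4 (δ α : ℝ) (hδ : 0 < δ) (hα : 1 < α)
    (w w' w'' : ℝ → ℝ) (m : ℝ → ℝ)
    (hw : ∀ t, δ ≤ t → HasDerivAt w (w' t) t)
    (hw'c : ContinuousOn w' (Set.Ici δ))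
    (hw' : ∀ t, δ < t → HasDerivAt w' (w'' t) t)
    (hbdd : ∃ B, ∀ t, δ ≤ t → B ≤ w t)
    (hmnn : ∀ t, δ < t → 0 ≤ m t)
    (hmint : IntegrableOn m (Set.Ioi δ))
    (hineq : ∀ᵐ t ∂(volume.restrict (Set.Ioi δ)), t * w'' t + α * w' t ≤ m t) :
    IntegrableOn (fun t => max (w' t) 0) (Set.Ioi δ) ∧
      ∃ l, Filter.Tendsto w Filter.atTop (nhds l) := by
  obtain ⟨B, hB⟩ := hbdd
  have hα0 : (0:ℝ) < α - 1 := by linarith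
  set C : ℝ := δ ^ α * w' δ with hCdef
  set φ : ℝ → ℝ := fun s => s ^ (α - 1) * m s with hφdef
  have hφnn : ∀ s, δ < s → 0 ≤ φ s := fun s hs =>
    mul_nonneg (Real.rpow_nonneg (le_of_lt (hδ.trans hs)) _) (hmnn s hs)
  -- local integrability of φ
  have hφint : ∀ b : ℝ, IntegrableOn φ (Ioc δ b) := by
    intro b
    have hm' : IntegrableOn m (Ioc δ b) := hmint.mono_set Ioc_subset_Ioi_self
    refine Integrable.bdd_mul (c := b ^ (α-1)) hm' ?_ ?_
    · refine Continuous.aestronglyMeasurable ?_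
      rw [continuous_iff_continuousAt]
      exact fun x => Real.continuousAt_rpow_const x _ (Or.inr hα0.le)
    · filter_upwards [self_mem_ae_restrict measurableSet_Ioc] with x hx
      rw [Real.norm_eq_abs, abs_of_nonneg (Real.rpow_nonneg (hδ.trans hx.1).le _)]
      exact Real.rpow_le_rpow (hδ.trans hx.1).le hx.2 hα0.le
  have hφintIcc : ∀ b : ℝ, IntegrableOn φ (Icc δ b) := fun b =>
    (integrableOn_Icc_iff_integrableOn_Ioc).2 (hφint b)
  set Φ : ℝ → ℝ := fun t => ∫ s in Ioc δ t, φ s with hΦdef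
  have hΦnn : ∀ t, 0 ≤ Φ t := fun t =>
    setIntegral_nonneg measurableSet_Ioc fun s hs => hφnn s hs.1
  -- the a.e. inequality, in pointwise-implication form
  have hineq' : ∀ᵐ x ∂volume, x ∈ Ioi δ → x * w'' x + α * w' x ≤ m x :=
    (ae_restrict_iff' measurableSet_Ioi).1 hineq
  -- Step A: ∀ t > δ, t^α w'(t) ≤ C + Φ t
  have key : ∀ t, δ < t → t ^ α * w' t ≤ C + Φ t := by
    intro t ht
    set v' : ℝ → ℝ := fun x => α * x ^ (α-1) * w' x + x ^ α * w'' x with hv'def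
    set ψ : ℝ → ℝ := fun x => max (φ x) (v' x) with hψdef
    have hψφ : ∀ᵐ x ∂volume, x ∈ Ioi δ → ψ x = φ x := by
      filter_upwards [hineq'] with x hx hxδ
      have hx0 : (0:ℝ) < x := hδ.trans hxδ
      refine max_eq_left ?_
      have hxa : x ^ α = x ^ (α-1) * x := by
        rw [← Real.rpow_add_one (ne_of_gt hx0) (α-1)]; ring_nf
      have : v' x = x ^ (α-1) * (x * w'' x + α * w' x) := by
        simp only [hv'def, hxa]; ring
      rw [this, hφdef]
      exact mul_le_mul_of_nonneg_left (hx hxδ) (Real.rpow_nonneg hx0.le _)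
    have hψae : ∀ᵐ x ∂(volume.restrict (Icc δ t)), ψ x = φ x := by
      have h1 : ∀ᵐ x ∂(volume.restrict (Icc δ t)), x ∈ Ioi δ → ψ x = φ x :=
        ae_restrict_of_ae hψφ
      have h2 : ∀ᵐ x ∂(volume.restrict (Icc δ t)), x ≠ δ := by
        refine ae_restrict_of_ae ?_
        rw [ae_iff]
        simpa using measure_singleton δ
      filter_upwards [h1, h2, self_mem_ae_restrict measurableSet_Icc] with x h1 h2 h3
      exact h1 (lt_of_le_of_ne h3.1 (Ne.symm h2))
    have hψint : IntegrableOn ψ (Icc δ t) := (hφintIcc t).congr (EventuallyEq.symm hψae)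
    have hvcont : ContinuousOn (fun x => x ^ α * w' x) (Icc δ t) := by
      refine ContinuousOn.mul ?_ (hw'c.mono Icc_subset_Ici_self)
      refine Continuous.continuousOn ?_
      rw [continuous_iff_continuousAt]
      exact fun x => Real.continuousAt_rpow_const x _ (Or.inr (by linarith))
    have hvderiv : ∀ x ∈ Ioo δ t, HasDerivWithinAt (fun x => x ^ α * w' x) (v' x) (Ioi x) x := by
      intro x hx
      have hx0 : (0:ℝ) < x := hδ.trans hx.1
      have h1 : HasDerivAt (fun y : ℝ => y ^ α) (α * x ^ (α - 1)) x :=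
        Real.hasDerivAt_rpow_const (Or.inl (ne_of_gt hx0))
      exact (h1.mul (hw' x hx.1)).hasDerivWithinAt
    have hsub := intervalIntegral.sub_le_integral_of_hasDeriv_right_of_le ht.le hvcont hvderiv hψint
      (fun x _ => le_max_right _ _)
    have heq : (∫ y in δ..t, ψ y) = ∫ y in δ..t, φ y := by
      refine intervalIntegral.integral_congr_ae ?_
      rw [uIoc_of_le ht.le]
      filter_upwards [hψφ] with x hx hmem
      exact hx hmem.1
    rw [heq, intervalIntegral.integral_of_le ht.le] at hsub
    have : (δ:ℝ) ^ α * w' δ = C := rfl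
    linarith [hsub]
  -- pointwise bound
  set g : ℝ → ℝ := fun t => t ^ (-α) * (max C 0 + Φ t) with hgdef
  have hgnn : ∀ t, δ < t → 0 ≤ g t := fun t ht =>
    mul_nonneg (Real.rpow_nonneg (hδ.trans ht).le _) (add_nonneg (le_max_right _ _) (hΦnn t))
  have hbound : ∀ t, δ < t → max (w' t) 0 ≤ g t := by
    intro t ht
    have ht0 : (0:ℝ) < t := hδ.trans ht
    refine max_le ?_ (hgnn t ht)
    have h1 : t ^ (-α) * (t ^ α * w' t) ≤ t ^ (-α) * (C + Φ t) :=
      mul_le_mul_of_nonneg_left (key t ht) (Real.rpow_nonneg ht0.le _)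
    have h2 : t ^ (-α) * t ^ α = 1 := by
      rw [← Real.rpow_add ht0]; norm_num
    calc w' t = t ^ (-α) * t ^ α * w' t := by rw [h2]; ring
    _ = t ^ (-α) * (t ^ α * w' t) := by ring
    _ ≤ t ^ (-α) * (C + Φ t) := h1
    _ ≤ g t := mul_le_mul_of_nonneg_left
        (add_le_add_left (le_max_left _ _) _) (Real.rpow_nonneg ht0.le _)
  -- continuity of Φ on Ioi δ
  have hΦcont : ContinuousOn Φ (Ioi δ) := by
    intro t ht
    have h1 : ContinuousOn Φ (Icc δ (t+1)) := intervalIntegral.continuousOn_primitive (hφintIcc (t+1))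
    exact ((h1.continuousAt (Icc_mem_nhds ht (lt_add_one t)))).continuousWithinAt
  have hrpowcont : ContinuousOn (fun t : ℝ => t ^ (-α)) (Ioi δ) := by
    intro t ht
    exact (Real.continuousAt_rpow_const t _ (Or.inl (ne_of_gt (hδ.trans ht)))).continuousWithinAt
  have hgcont : ContinuousOn g (Ioi δ) := hrpowcont.mul (continuousOn_const.add hΦcont)
  -- measurable representative of m
  obtain ⟨m₁, hm₁meas, hm₁eq⟩ : ∃ m₁ : ℝ → ℝ, StronglyMeasurable m₁ ∧
      m =ᵐ[volume.restrict (Ioi δ)] m₁ :=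
    ⟨hmint.aestronglyMeasurable.mk m, hmint.aestronglyMeasurable.stronglyMeasurable_mk,
      hmint.aestronglyMeasurable.ae_eq_mk⟩
  set M : ℝ → ENNReal := fun s => ENNReal.ofReal (s ^ (α-1) * m₁ s) with hMdef
  have hrpowmeas : Measurable fun s : ℝ => s ^ (α - 1) := by
    refine Continuous.measurable ?_
    rw [continuous_iff_continuousAt]
    exact fun x => Real.continuousAt_rpow_const x _ (Or.inr hα0.le)
  have hMmeas : Measurable M := (hrpowmeas.mul hm₁meas.measurable).ennreal_ofReal
  have hmaxcont : Continuous fun t : ℝ => (max t δ) ^ (-α) :=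
    (continuous_id.max continuous_const).rpow_const
      fun x => Or.inl (ne_of_gt (lt_max_of_lt_right hδ))
  have L1 : ∀ t, δ < t → ENNReal.ofReal (Φ t) = ∫⁻ s in Ioc δ t, M s := by
    intro t ht
    rw [ofReal_integral_eq_lintegral_ofReal (hφint t) ?nn]
    case nn =>
      filter_upwards [self_mem_ae_restrict measurableSet_Ioc] with s hs
      exact hφnn s hs.1
    refine lintegral_congr_ae ?_
    have h2 := ae_restrict_of_ae_restrict_of_subset
      (Ioc_subset_Ioi_self : Ioc δ t ⊆ Ioi δ) hm₁eq
    filter_upwards [h2] with s hs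
    show ENNReal.ofReal (s ^ (α-1) * m s) = ENNReal.ofReal (s ^ (α-1) * m₁ s)
    rw [hs]
  have hmnnae : (0 : ℝ → ℝ) ≤ᵐ[volume.restrict (Ioi δ)] m := by
    filter_upwards [self_mem_ae_restrict measurableSet_Ioi] with s hs
    exact hmnn s hs
  have hm₁fin : ∫⁻ s in Ioi δ, ENNReal.ofReal (m₁ s) < ⊤ := by
    have : ∫⁻ s in Ioi δ, ENNReal.ofReal (m₁ s) = ENNReal.ofReal (∫ s in Ioi δ, m s) := by
      rw [ofReal_integral_eq_lintegral_ofReal hmint hmnnae]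
      refine lintegral_congr_ae ?_
      filter_upwards [hm₁eq] with s hs
      rw [hs]
    rw [this]
    exact ENNReal.ofReal_lt_top
  -- the Fubini–Tonelli estimate
  have hfin : ∫⁻ t in Ioi δ, ENNReal.ofReal (t ^ (-α) * Φ t) < ⊤ := by
    set S : Set (ℝ × ℝ) := {q : ℝ × ℝ | δ < q.2 ∧ q.2 ≤ q.1} with hSdef
    have hSmeas : MeasurableSet S :=
      (measurableSet_lt measurable_const measurable_snd).inter
        (measurableSet_le measurable_snd measurable_fst)
    set F : ℝ × ℝ → ENNReal :=
      S.indicator (fun q => ENNReal.ofReal ((max q.1 δ) ^ (-α)) * M q.2) with hFdef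
    have hFmeas : Measurable F := by
      refine Measurable.indicator ?_ hSmeas
      exact ((hmaxcont.measurable.comp measurable_fst).ennreal_ofReal).mul
        (hMmeas.comp measurable_snd)
    have step1 : ∫⁻ t in Ioi δ, ENNReal.ofReal (t ^ (-α) * Φ t)
        = ∫⁻ t in Ioi δ, ∫⁻ s, F (t, s) := by
      refine setLIntegral_congr_fun_ae measurableSet_Ioi (ae_of_all _ ?_)
      intro t ht
      have ht0 : (0:ℝ) < t := hδ.trans ht
      rw [ENNReal.ofReal_mul (Real.rpow_nonneg ht0.le _), L1 t ht,
        ← lintegral_const_mul _ hMmeas, ← lintegral_indicator measurableSet_Ioc]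
      refine lintegral_congr fun s => ?_
      have hmax : max t δ = t := max_eq_left (le_of_lt ht)
      simp only [hFdef, hSdef, indicator_apply, mem_Ioc, mem_setOf_eq, hmax]
    have hswap : (∫⁻ t in Ioi δ, ∫⁻ s, F (t, s)) = ∫⁻ s, ∫⁻ t in Ioi δ, F (t, s) :=
      lintegral_lintegral_swap hFmeas.aemeasurable
    have hinner : ∀ s : ℝ, (∫⁻ t in Ioi δ, F (t, s))
        = (Ioi δ).indicator
            (fun s => ENNReal.ofReal ((α-1)⁻¹) * ENNReal.ofReal (m₁ s)) s := by
      intro s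
      by_cases hs : δ < s
      · have hs0 : (0:ℝ) < s := hδ.trans hs
        have e1 : ∀ t : ℝ, F (t, s)
            = (Ici s).indicator (fun t => ENNReal.ofReal ((max t δ) ^ (-α))) t * M s := by
          intro t
          simp only [hFdef, hSdef, indicator_apply, mem_setOf_eq, mem_Ici]
          by_cases hst : s ≤ t
          · simp [hst, hs]
          · simp [hst, hs]
        rw [lintegral_congr fun t => e1 t]
        rw [lintegral_mul_const' _ _ ENNReal.ofReal_ne_top]
        rw [lintegral_indicator measurableSet_Ici, Measure.restrict_restrict measurableSet_Ici]
        have hIcieq : Ici s ∩ Ioi δ = Ici s :=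
          inter_eq_left.mpr fun x hx => lt_of_lt_of_le hs hx
        rw [hIcieq]
        have hIci : (∫⁻ t in Ici s, ENNReal.ofReal ((max t δ) ^ (-α)))
            = ENNReal.ofReal (s ^ (-α+1) * (α-1)⁻¹) := by
          have hcg : (∫⁻ t in Ici s, ENNReal.ofReal ((max t δ) ^ (-α)))
              = ∫⁻ t in Ici s, ENNReal.ofReal (t ^ (-α)) := by
            refine setLIntegral_congr_fun_ae measurableSet_Ici (ae_of_all _ ?_)
            intro t htm
            rw [max_eq_left (le_trans hs.le htm)]
          rw [hcg, ← Measure.restrict_congr_set Ioi_ae_eq_Ici]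
          rw [← ofReal_integral_eq_lintegral_ofReal
            (integrableOn_Ioi_rpow_of_lt (by linarith) hs0) ?nn2]
          case nn2 =>
            filter_upwards [self_mem_ae_restrict measurableSet_Ioi] with t htm
            exact Real.rpow_nonneg (hs0.trans htm).le _
          rw [integral_Ioi_rpow_of_lt (by linarith) hs0]
          congr 1
          rw [show (-α+1 : ℝ) = -(α-1) by ring]
          rw [neg_div_neg_eq, div_eq_mul_inv]
        rw [hIci, Set.indicator_of_mem (show s ∈ Ioi δ from hs)]
        rw [ENNReal.ofReal_mul (Real.rpow_nonneg hs0.le _),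
          ENNReal.ofReal_mul (Real.rpow_nonneg hs0.le _)]
        have h11 : ENNReal.ofReal (s ^ (-α+1)) * ENNReal.ofReal (s ^ (α-1)) = 1 := by
          rw [← ENNReal.ofReal_mul (Real.rpow_nonneg hs0.le _), ← Real.rpow_add hs0]
          norm_num
        calc ENNReal.ofReal (s ^ (-α+1)) * ENNReal.ofReal ((α-1)⁻¹)
              * (ENNReal.ofReal (s ^ (α-1)) * ENNReal.ofReal (m₁ s))
            = (ENNReal.ofReal (s ^ (-α+1)) * ENNReal.ofReal (s ^ (α-1)))
              * (ENNReal.ofReal ((α-1)⁻¹) * ENNReal.ofReal (m₁ s)) := by ring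
          _ = ENNReal.ofReal ((α-1)⁻¹) * ENNReal.ofReal (m₁ s) := by rw [h11, one_mul]
      · have e0 : ∀ t : ℝ, F (t, s) = 0 := by
          intro t
          refine indicator_of_notMem ?_ _
          simp only [hSdef, mem_setOf_eq]
          exact fun h => hs h.1
        rw [lintegral_congr fun t => e0 t, indicator_of_notMem (by simpa using hs)]
        simp
    rw [step1, hswap, lintegral_congr hinner, lintegral_indicator measurableSet_Ioi,
      lintegral_const_mul _ hm₁meas.measurable.ennreal_ofReal]
    exact ENNReal.mul_lt_top ENNReal.ofReal_lt_top hm₁fin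
  -- integrability of the dominating function g
  have hrintg : IntegrableOn (fun t : ℝ => t ^ (-α) * max C 0) (Ioi δ) :=
    (integrableOn_Ioi_rpow_of_lt (by linarith) hδ).mul_const _
  have hgint : IntegrableOn g (Ioi δ) := by
    refine ⟨hgcont.aestronglyMeasurable measurableSet_Ioi, ?_⟩
    rw [hasFiniteIntegral_iff_ofReal ?nn]
    case nn =>
      filter_upwards [self_mem_ae_restrict measurableSet_Ioi] with t ht
      exact hgnn t ht
    have hsplit : (∫⁻ t in Ioi δ, ENNReal.ofReal (g t))
        = ∫⁻ t in Ioi δ, (ENNReal.ofReal (t ^ (-α) * max C 0)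
            + ENNReal.ofReal (t ^ (-α) * Φ t)) := by
      refine setLIntegral_congr_fun_ae measurableSet_Ioi (ae_of_all _ ?_)
      intro t ht
      rw [← ENNReal.ofReal_add
        (mul_nonneg (Real.rpow_nonneg (hδ.trans ht).le _) (le_max_right _ _))
        (mul_nonneg (Real.rpow_nonneg (hδ.trans ht).le _) (hΦnn t))]
      congr 1
      simp only [hgdef]
      ring
    have hmeas1 : AEMeasurable (fun t : ℝ => ENNReal.ofReal (t ^ (-α) * max C 0))
        (volume.restrict (Ioi δ)) :=
      ((hrpowcont.mul continuousOn_const).aemeasurable measurableSet_Ioi).ennreal_ofReal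
    rw [hsplit, lintegral_add_left' hmeas1]
    have h1 : (∫⁻ t in Ioi δ, ENNReal.ofReal (t ^ (-α) * max C 0)) < ⊤ := by
      rw [← ofReal_integral_eq_lintegral_ofReal hrintg ?nn3]
      case nn3 =>
        filter_upwards [self_mem_ae_restrict measurableSet_Ioi] with t ht
        exact mul_nonneg (Real.rpow_nonneg (hδ.trans ht).le _) (le_max_right _ _)
      exact ENNReal.ofReal_lt_top
    exact ENNReal.add_lt_top.mpr ⟨h1, hfin⟩
  -- integrability of the positive part
  have hpmeas : AEStronglyMeasurable (fun t => max (w' t) 0) (volume.restrict (Ioi δ)) :=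
    (((hw'c.mono Ioi_subset_Ici_self).sup continuousOn_const)).aestronglyMeasurable
      measurableSet_Ioi
  have hpint : IntegrableOn (fun t => max (w' t) 0) (Ioi δ) := by
    refine Integrable.mono hgint hpmeas ?_
    filter_upwards [self_mem_ae_restrict measurableSet_Ioi] with t ht
    rw [Real.norm_eq_abs, Real.norm_eq_abs, abs_of_nonneg (le_max_right _ _),
      abs_of_nonneg (hgnn t ht)]
    exact hbound t ht
  -- FTC for w
  have hFTC : ∀ t, δ ≤ t → (∫ x in δ..t, w' x) = w t - w δ := by
    intro t ht
    exact intervalIntegral.integral_eq_sub_of_hasDerivAt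
      (fun x hx => hw x (by rw [uIcc_of_le ht] at hx; exact hx.1))
      ((hw'c.mono (by rw [uIcc_of_le ht]; exact Icc_subset_Ici_self)).intervalIntegrable)
  have hw'ii : ∀ t, δ ≤ t → IntervalIntegrable w' volume δ t := fun t ht =>
    (hw'c.mono (by rw [uIcc_of_le ht]; exact Icc_subset_Ici_self)).intervalIntegrable
  have hpii : ∀ t, δ ≤ t → IntervalIntegrable (fun x => max (w' x) 0) volume δ t := fun t ht =>
    ((hw'c.mono (by rw [uIcc_of_le ht]; exact Icc_subset_Ici_self)).sup
      continuousOn_const).intervalIntegrable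
  set q : ℝ → ℝ := fun t => max (-w' t) 0 with hqdef
  have hqcont : ContinuousOn q (Ici δ) := (hw'c.neg).sup continuousOn_const
  have hq_eq : q = fun x => max (w' x) 0 - w' x := by
    funext x
    rcases le_total 0 (w' x) with h | h
    · rw [hqdef]
      simp only
      rw [max_eq_right (neg_nonpos.mpr h), max_eq_left h]
      ring
    · rw [hqdef]
      simp only
      rw [max_eq_left (neg_nonneg.mpr h), max_eq_right h]
      ring
  set P : ℝ := ∫ x in Ioi δ, max (w' x) 0 with hPdef
  have hPbd : ∀ t, δ ≤ t → (∫ x in δ..t, max (w' x) 0) ≤ P := by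
    intro t ht
    rw [intervalIntegral.integral_of_le ht]
    refine setIntegral_mono_set hpint (ae_of_all _ fun x => le_max_right _ _) ?_
    exact HasSubset.Subset.eventuallyLE Ioc_subset_Ioi_self
  have hqii : ∀ t, δ ≤ t → IntervalIntegrable q volume δ t := fun t ht =>
    (hqcont.mono (by rw [uIcc_of_le ht]; exact Icc_subset_Ici_self)).intervalIntegrable
  have hqbd : ∀ᶠ (i : ℝ) in atTop, (∫ x in δ..(id i), ‖q x‖) ≤ P + (w δ - B) := by
    filter_upwards [eventually_ge_atTop δ] with t ht
    have hnorm : (fun x => ‖q x‖) = q := funext fun x => Real.norm_of_nonneg (le_max_right _ _)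
    show (∫ x in δ..t, ‖q x‖) ≤ P + (w δ - B)
    rw [hnorm, hq_eq, intervalIntegral.integral_sub (hpii t ht) (hw'ii t ht), hFTC t ht]
    have h1 := hB t ht
    have h2 := hPbd t ht
    linarith
  have hqint : IntegrableOn q (Ioi δ) := by
    refine integrableOn_Ioi_of_intervalIntegral_norm_bounded (P + (w δ - B)) δ
      (fun i => ?_) tendsto_id hqbd
    rcases le_or_gt δ i with hi | hi
    · exact (hqii i hi).1
    · rw [show Ioc δ (id i) = (∅ : Set ℝ) from Ioc_eq_empty (not_lt.mpr hi.le)]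
      exact integrableOn_empty
  have hw'int : IntegrableOn w' (Ioi δ) := by
    have h2 := hpint.sub hqint
    refine h2.congr (ae_of_all _ fun x => ?_)
    show max (w' x) 0 - q x = w' x
    rw [hq_eq]
    ring
  refine ⟨hpint, ⟨w δ + ∫ x in Ioi δ, w' x, ?_⟩⟩
  have hT := intervalIntegral_tendsto_integral_Ioi δ hw'int tendsto_id
  have hT2 : Tendsto (fun t : ℝ => w δ + ∫ x in δ..(id t), w' x) atTop
      (nhds (w δ + ∫ x in Ioi δ, w' x)) := tendsto_const_nhds.add hT
  refine Tendsto.congr' ?_ hT2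
  filter_upwards [eventually_ge_atTop δ] with t ht
  show w δ + ∫ x in δ..t, w' x = w t
  rw [hFTC t ht]
  ring
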